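/- Let f : E → ℝ be convex and attain its minimum value f* at a point x* ∈ E. Fix an integer p ≥ 1 and constants L > 0, R > 0. Let (x_k)_{k≥0} be a sequence in E such that, for every k, there exists a p-th order surrogate g_k of f at x_k with error constant L, and x_{k+1} is a global minimizer of g_k over E. Assume that every x ∈ E with f(x) ≤ f(x_0) satisfies ‖x − x*‖ ≤ R. Then for every k ≥ 1: f(x_k) − f* ≤ L·R^{p+1} / ( p! · (1 + k/(p+1))^p ). -/

import Mathlib

open scoped RealInnerProductSpace BigOperators

variable {E : Type*} [NormedAddCommGroup E] [InnerProductSpace ℝ E] [FiniteDimensional ℝ E]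

/-- `ψ : E → ℝ` is `p` times continuously differentiable and its `p`-th Fréchet
derivative is `L`-Lipschitz. -/
def HasLipschitzDerivOfOrder (p : ℕ) (L : ℝ) (ψ : E → ℝ) : Prop :=
  ContDiff ℝ p ψ ∧
    ∀ x y : E, ‖iteratedFDeriv ℝ p ψ x - iteratedFDeriv ℝ p ψ y‖ ≤ L * ‖x - y‖

/-- `g` is a `p`-th order surrogate of `f` at `x` with error constant `L`:
(i) `g ≥ f`; (ii) the error `h := g - f` has `L`-Lipschitz `p`-th derivative;
(iii) `h(x) = 0` and `Dⁱh(x) = 0` for `i = 1, …, p`. -/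
def IsSurrogate (p : ℕ) (L : ℝ) (f g : E → ℝ) (x : E) : Prop :=
  (∀ y : E, f y ≤ g y) ∧
  HasLipschitzDerivOfOrder p L (fun y => g y - f y) ∧
  g x - f x = 0 ∧
  ∀ i : ℕ, 1 ≤ i → i ≤ p → iteratedFDeriv ℝ i (fun y => g y - f y) x = 0

lemma nat_amgm : ∀ (p k : ℕ), (k + 1) * (k + p + 2) ^ p ≤ (k + p + 1) ^ (p + 1) := by
  intro p
  induction p with
  | zero => intro k; simp
  | succ p ih =>
    intro k
    have h1 := ih (k + 1)
    -- (k+2) * (k+p+3)^p ≤ (k+p+2)^(p+1)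
    have h1' : (k + 2) * (k + p + 3) ^ p ≤ (k + p + 2) ^ (p + 1) := by
      have e1 : k + 1 + p + 2 = k + p + 3 := by omega
      have e2 : k + 1 + p + 1 = k + p + 2 := by omega
      rwa [e1, e2, show k + 1 + 1 = k + 2 from rfl] at h1
    have key : (k + 2) * ((k + 1) * (k + (p+1) + 2) ^ (p+1)) ≤
        (k + 2) * (k + (p+1) + 1) ^ (p + 2) := by
      have e3 : k + (p+1) + 2 = k + p + 3 := by omega
      have e4 : k + (p+1) + 1 = k + p + 2 := by omega
      rw [e3, e4]
      calc (k + 2) * ((k + 1) * (k + p + 3) ^ (p+1))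
          = ((k + 1) * (k + p + 3)) * ((k + 2) * (k + p + 3) ^ p) := by ring
        _ ≤ ((k + 1) * (k + p + 3)) * (k + p + 2) ^ (p + 1) :=
            Nat.mul_le_mul_left _ h1'
        _ ≤ ((k + 2) * (k + p + 2)) * (k + p + 2) ^ (p + 1) := by
            have : (k + 1) * (k + p + 3) ≤ (k + 2) * (k + p + 2) := by nlinarith
            exact Nat.mul_le_mul_right _ this
        _ = (k + 2) * (k + p + 2) ^ (p + 2) := by ring
    exact Nat.le_of_mul_le_mul_left key (by omega)

lemma real_amgm (p k : ℕ) :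
    ((k : ℝ) + 1) * ((k : ℝ) + p + 2) ^ p ≤ ((k : ℝ) + p + 1) ^ (p + 1) := by
  have := nat_amgm p k
  have : (((k + 1) * (k + p + 2) ^ p : ℕ) : ℝ) ≤ (((k + p + 1) ^ (p + 1) : ℕ) : ℝ) := by
    exact_mod_cast this
  push_cast at this
  convert this using 2 <;> ring

/-- The recursion step inequality over the reals. -/
lemma rec_step (p k : ℕ) :
    ((k : ℝ) + 1) / (((k : ℝ) + p + 2) * ((k : ℝ) + p + 1) ^ p)
      + 1 / ((k : ℝ) + p + 2) ^ (p + 1) ≤ 1 / ((k : ℝ) + p + 2) ^ p := by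
  have ha : (0 : ℝ) < (k : ℝ) + p + 1 := by positivity
  have hb : (0 : ℝ) < (k : ℝ) + p + 2 := by positivity
  have hap : (0 : ℝ) < ((k : ℝ) + p + 1) ^ p := by positivity
  have hbp : (0 : ℝ) < ((k : ℝ) + p + 2) ^ p := by positivity
  have hamgm := real_amgm p k
  rw [div_add_div _ _ (by positivity) (by positivity), div_le_div_iff₀ (by positivity) (by positivity)]
  have e1 : ((k : ℝ) + p + 2) ^ (p + 1) = ((k : ℝ) + p + 2) ^ p * ((k : ℝ) + p + 2) := by ring
  have e2 : ((k : ℝ) + p + 1) ^ (p + 1) = ((k : ℝ) + p + 1) ^ p * ((k : ℝ) + p + 1) := by ring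
  nlinarith [mul_pos hap hbp, mul_pos hbp hb, mul_pos hap (mul_pos hbp hb),
    mul_le_mul_of_nonneg_right hamgm (le_of_lt (mul_pos hbp hbp))]

lemma taylor_decay {p : ℕ} {L : ℝ} (hL : 0 ≤ L) (h : E → ℝ) (x : E)
    (hC : ContDiff ℝ p h)
    (hLip : ∀ a b : E, ‖iteratedFDeriv ℝ p h a - iteratedFDeriv ℝ p h b‖ ≤ L * ‖a - b‖)
    (hvan : ∀ i, i ≤ p → iteratedFDeriv ℝ i h x = 0) :
    ∀ j, j ≤ p → ∀ y : E, ‖iteratedFDeriv ℝ (p - j) h y‖ ≤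
      L * ‖y - x‖ ^ (j + 1) / (j + 1).factorial := by
  intro j
  induction j with
  | zero =>
    intro _ y
    have : iteratedFDeriv ℝ p h y = iteratedFDeriv ℝ p h y - iteratedFDeriv ℝ p h x := by
      rw [hvan p le_rfl, sub_zero]
    simp only [Nat.sub_zero, Nat.factorial_one, Nat.cast_one, pow_one]
    rw [this]
    simpa using hLip y x
  | succ j ih =>
    intro hjp y
    have hjp' : j ≤ p := Nat.le_of_succ_le hjp
    have IH := ih hjp'
    set i : ℕ := p - (j + 1) with hi
    have hip : i + 1 = p - j := by omega
    have hiltp : i < p := by omega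
    set v : E := y - x with hv
    set nv : ℝ := ‖v‖ with hnv
    have hnv0 : 0 ≤ nv := norm_nonneg _
    -- the curve
    set ψ : E → (E[×i]→L[ℝ] ℝ) := iteratedFDeriv ℝ i h with hψ
    have hd : Differentiable ℝ ψ :=
      hC.differentiable_iteratedFDeriv (by exact_mod_cast hiltp)
    set u : ℝ → (E[×i]→L[ℝ] ℝ) := fun t => ψ (x + t • v) with hu
    set u' : ℝ → (E[×i]→L[ℝ] ℝ) := fun t => fderiv ℝ ψ (x + t • v) v with hu'
    have hline : ∀ t : ℝ, HasDerivAt (fun s : ℝ => x + s • v) v t := by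
      intro t
      simpa using ((hasDerivAt_id t).smul_const v).const_add x
    have huderiv : ∀ t : ℝ, HasDerivAt u (u' t) t := by
      intro t
      exact (hd (x + t • v)).hasFDerivAt.comp_hasDerivAt t (hline t)
    -- the boundary function
    set c : ℝ := L * nv ^ (j + 2) with hc
    have hc0 : 0 ≤ c := by positivity
    set B : ℝ → ℝ := fun t => c * t ^ (j + 2) / (j + 2).factorial with hB
    set B' : ℝ → ℝ := fun t => c * t ^ (j + 1) / (j + 1).factorial with hB'
    have hfact : ((j + 2).factorial : ℝ) = (j + 2) * (j + 1).factorial := by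
      rw [show j + 2 = (j + 1) + 1 by ring, Nat.factorial_succ]
      push_cast; ring
    have hBderiv : ∀ t : ℝ, HasDerivAt B (B' t) t := by
      intro t
      have h1 : HasDerivAt (fun s : ℝ => c * s ^ (j + 2) / (j + 2).factorial)
          (c * ((j + 2) * t ^ (j + 1)) / (j + 2).factorial) t := by
        simpa using (((hasDerivAt_pow (j + 2) t).const_mul c).div_const ((j + 2).factorial : ℝ))
      convert h1 using 1
      rw [hB', hfact]
      have : ((j + 1).factorial : ℝ) ≠ 0 := by positivity
      field_simp
    have hbound : ∀ t ∈ Set.Ico (0 : ℝ) 1, ‖u' t‖ ≤ B' t := by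
      intro t ht
      have h1 : ‖u' t‖ ≤ ‖fderiv ℝ ψ (x + t • v)‖ * ‖v‖ :=
        ContinuousLinearMap.le_opNorm _ _
      have h2 : ‖fderiv ℝ ψ (x + t • v)‖ = ‖iteratedFDeriv ℝ (i + 1) h (x + t • v)‖ :=
        norm_fderiv_iteratedFDeriv
      have h3 : ‖iteratedFDeriv ℝ (p - j) h (x + t • v)‖ ≤
          L * ‖(x + t • v) - x‖ ^ (j + 1) / (j + 1).factorial := IH _
      have h4 : ‖(x + t • v) - x‖ = t * nv := by
        rw [add_sub_cancel_left, norm_smul, Real.norm_eq_abs, abs_of_nonneg ht.1]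
      calc ‖u' t‖ ≤ ‖iteratedFDeriv ℝ (p - j) h (x + t • v)‖ * nv := by
            rw [← hip] at h3 ⊢
            rw [← h2]
            exact h1
        _ ≤ (L * (t * nv) ^ (j + 1) / (j + 1).factorial) * nv := by
            rw [h4] at h3
            exact mul_le_mul_of_nonneg_right h3 hnv0
        _ = B' t := by
            rw [hB', hc]
            ring
    have hcont : ContinuousOn u (Set.Icc (0 : ℝ) 1) := by
      apply Continuous.continuousOn
      exact hd.continuous.comp (by continuity)
    have hstart : ‖u 0‖ ≤ B 0 := by
      have : u 0 = 0 := by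
        simp only [hu, zero_smul, add_zero]
        exact hvan i (le_of_lt hiltp)
      rw [this, hB]
      simp
    have key := image_norm_le_of_norm_deriv_right_le_deriv_boundary hcont
      (fun t _ => (huderiv t).hasDerivWithinAt) hstart hBderiv hbound
      (Set.right_mem_Icc.mpr zero_le_one)
    have hu1 : u 1 = iteratedFDeriv ℝ i h y := by
      simp [hu, hψ, hv]
    have hB1 : B 1 = L * nv ^ (j + 2) / (j + 2).factorial := by simp [hB, hc]
    rw [hu1, hB1] at key
    simpa [hi, hnv, hv, show j + 1 + 1 = j + 2 from rfl] using key

/-- Global sublinear convergence of the general higher-order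
majorization-minimization method for convex objectives. -/
theorem ghom_convex_sublinear_rate
    (f : E → ℝ) (hf : ConvexOn ℝ Set.univ f)
    (xstar : E) (hmin : ∀ y : E, f xstar ≤ f y)
    (p : ℕ) (hp : 1 ≤ p) (L R : ℝ) (hL : 0 < L) (hR : 0 < R)
    (x : ℕ → E)
    (hstep : ∀ k : ℕ, ∃ g : E → ℝ, IsSurrogate p L f g (x k) ∧
      ∀ y : E, g (x (k + 1)) ≤ g y)
    (hlevel : ∀ z : E, f z ≤ f (x 0) → ‖z - xstar‖ ≤ R) :
    ∀ k : ℕ, 1 ≤ k →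
      f (x k) - f xstar ≤
        L * R ^ (p + 1) /
          ((Nat.factorial p : ℝ) * (1 + (k : ℝ) / ((p : ℝ) + 1)) ^ p) := by
  set fstar := f xstar with hfstar
  set M : ℝ := L * R ^ (p + 1) / (p + 1).factorial with hM
  have hM0 : 0 < M := by positivity
  -- per-step surrogate upper bound
  have hsur : ∀ k : ℕ, ∀ y : E,
      f (x (k + 1)) ≤ f y + L * ‖y - x k‖ ^ (p + 1) / (p + 1).factorial := by
    intro k y
    obtain ⟨g, ⟨hge, ⟨hCd, hLip⟩, hx0, hvan⟩, hopt⟩ := hstep k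
    set h : E → ℝ := fun y => g y - f y with hh
    have hvan0 : ∀ i, i ≤ p → iteratedFDeriv ℝ i h (x k) = 0 := by
      intro i hi
      rcases Nat.eq_zero_or_pos i with h0 | h1
      · subst h0
        have : ‖iteratedFDeriv ℝ 0 h (x k)‖ = 0 := by
          rw [norm_iteratedFDeriv_zero]
          simp only [hh, hx0, norm_zero]
        exact norm_eq_zero.mp this
      · exact hvan i h1 hi
    have htay := taylor_decay hL.le h (x k) hCd hLip hvan0 p le_rfl y
    rw [Nat.sub_self, norm_iteratedFDeriv_zero] at htay
    have hhy : h y ≤ L * ‖y - x k‖ ^ (p + 1) / (p + 1).factorial :=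
      (le_abs_self _).trans htay
    calc f (x (k + 1)) ≤ g (x (k + 1)) := hge _
      _ ≤ g y := hopt y
      _ = f y + h y := by simp [hh]
      _ ≤ f y + L * ‖y - x k‖ ^ (p + 1) / (p + 1).factorial := by linarith
  -- descent
  have hdesc : ∀ k : ℕ, f (x (k + 1)) ≤ f (x k) := by
    intro k
    have := hsur k (x k)
    simpa [Nat.factorial_ne_zero] using this
  have hle0 : ∀ k : ℕ, f (x k) ≤ f (x 0) := by
    intro k
    induction k with
    | zero => exact le_rfl
    | succ k ih => exact (hdesc k).trans ih
  have hRk : ∀ k : ℕ, ‖x k - xstar‖ ≤ R := fun k => hlevel _ (hle0 k)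
  -- main per-step inequality
  have main : ∀ k : ℕ, ∀ α : ℝ, 0 ≤ α → α ≤ 1 →
      f (x (k + 1)) - fstar ≤ (1 - α) * (f (x k) - fstar) + α ^ (p + 1) * M := by
    intro k α h0 h1
    set y : E := x k + α • (xstar - x k) with hy
    have hyc : y = (1 - α) • x k + α • xstar := by
      rw [hy, smul_sub, sub_smul, one_smul]; abel
    have hconv : f y ≤ (1 - α) * f (x k) + α * fstar := by
      rw [hyc]
      exact hf.2 (Set.mem_univ _) (Set.mem_univ _) (by linarith) h0 (by ring)
    have hnorm : ‖y - x k‖ ≤ α * R := by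
      have e : y - x k = α • (xstar - x k) := by rw [hy]; abel
      rw [e, norm_smul, Real.norm_eq_abs, abs_of_nonneg h0]
      have hr := hRk k
      rw [norm_sub_rev] at hr
      exact mul_le_mul_of_nonneg_left hr h0
    have hpow : L * ‖y - x k‖ ^ (p + 1) / (p + 1).factorial ≤ α ^ (p + 1) * M := by
      have h2 : ‖y - x k‖ ^ (p + 1) ≤ α ^ (p + 1) * R ^ (p + 1) := by
        rw [← mul_pow]
        exact pow_le_pow_left₀ (norm_nonneg _) hnorm _
      rw [hM]
      have hfp : (0:ℝ) < ((p + 1).factorial : ℝ) := by positivity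
      calc L * ‖y - x k‖ ^ (p + 1) / ((p + 1).factorial : ℝ)
          ≤ L * (α ^ (p + 1) * R ^ (p + 1)) / ((p + 1).factorial : ℝ) := by
            gcongr
        _ = α ^ (p + 1) * (L * R ^ (p + 1) / ((p + 1).factorial : ℝ)) := by ring
    have := hsur k y
    linarith
  -- the decay sequence
  have claim : ∀ k : ℕ, 1 ≤ k →
      f (x k) - fstar ≤ M * ((p : ℝ) + 1) ^ (p + 1) / ((k : ℝ) + p + 1) ^ p := by
    intro k hk
    induction k with
    | zero => omega
    | succ k ih =>
      rcases Nat.eq_zero_or_pos k with rfl | hk1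
      · -- base case k = 1
        have h1 := main 0 1 zero_le_one le_rfl
        simp only [sub_self, zero_mul, one_pow, one_mul, zero_add] at h1
        have hb : M ≤ M * ((p : ℝ) + 1) ^ (p + 1) / ((1 : ℝ) + p + 1) ^ p := by
          rw [le_div_iff₀ (by positivity)]
          have := real_amgm p 0
          simp only [Nat.cast_zero, zero_add] at this
          have h2 : ((1:ℝ) + p + 1) ^ p ≤ ((p:ℝ) + 1) ^ (p + 1) := by
            calc ((1:ℝ) + p + 1) ^ p = ((p:ℝ) + 2) ^ p := by ring_nf
              _ ≤ ((p:ℝ) + 1) ^ (p + 1) := by nlinarith [this]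
          nlinarith [hM0.le]
        push_cast
        linarith
      · -- inductive step
        have IH := ih hk1
        set a : ℝ := (k : ℝ) + p + 1 with ha
        set b : ℝ := (k : ℝ) + p + 2 with hb
        have ha0 : (0:ℝ) < a := by positivity
        have hb0 : (0:ℝ) < b := by positivity
        set α : ℝ := ((p : ℝ) + 1) / b with hα
        have hα0 : 0 ≤ α := by positivity
        have hα1 : α ≤ 1 := by
          rw [hα, div_le_one hb0, hb]
          have : (1:ℝ) ≤ (k:ℝ) := by exact_mod_cast hk1
          linarith
        have h1 := main k α hα0 hα1
        have h1α : 1 - α = ((k : ℝ) + 1) / b := by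
          rw [hα, hb]; field_simp; ring
        have h1α0 : 0 ≤ 1 - α := by linarith
        have step2 : (1 - α) * (f (x k) - fstar) + α ^ (p + 1) * M ≤
            M * ((p : ℝ) + 1) ^ (p + 1) / ((k : ℝ) + 1 + p + 1) ^ p := by
          have hC : (1 - α) * (f (x k) - fstar) ≤
              (1 - α) * (M * ((p : ℝ) + 1) ^ (p + 1) / a ^ p) :=
            mul_le_mul_of_nonneg_left IH h1α0
          have e1 : (1 - α) * (M * ((p : ℝ) + 1) ^ (p + 1) / a ^ p) =
              M * ((p : ℝ) + 1) ^ (p + 1) * (((k : ℝ) + 1) / (b * a ^ p)) := by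
            rw [h1α]; field_simp
          have e2 : α ^ (p + 1) * M = M * ((p : ℝ) + 1) ^ (p + 1) * (1 / b ^ (p + 1)) := by
            rw [hα, div_pow]; field_simp
          have hrec := rec_step p k
          rw [← ha, ← hb] at hrec
          have hMp : (0:ℝ) ≤ M * ((p : ℝ) + 1) ^ (p + 1) := by positivity
          have e3 : ((k : ℝ) + 1 + p + 1) ^ p = b ^ p := by rw [hb]; ring_nf
          calc (1 - α) * (f (x k) - fstar) + α ^ (p + 1) * M
              ≤ M * ((p : ℝ) + 1) ^ (p + 1) *
                (((k : ℝ) + 1) / (b * a ^ p) + 1 / b ^ (p + 1)) := by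
                rw [mul_add, ← e1, ← e2]; linarith
            _ ≤ M * ((p : ℝ) + 1) ^ (p + 1) * (1 / b ^ p) :=
                mul_le_mul_of_nonneg_left hrec hMp
            _ = M * ((p : ℝ) + 1) ^ (p + 1) / ((k : ℝ) + 1 + p + 1) ^ p := by
                rw [e3]; ring
        push_cast
        linarith [h1, step2]
  -- convert to the stated form
  intro k hk
  have hconv := claim k hk
  have heq : M * ((p : ℝ) + 1) ^ (p + 1) / ((k : ℝ) + p + 1) ^ p =
      L * R ^ (p + 1) / ((Nat.factorial p : ℝ) * (1 + (k : ℝ) / ((p : ℝ) + 1)) ^ p) := by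
    have hfact : (((p + 1).factorial : ℕ) : ℝ) = ((p : ℝ) + 1) * (p.factorial : ℝ) := by
      rw [Nat.factorial_succ]; push_cast; ring
    have hp1 : (0:ℝ) < (p : ℝ) + 1 := by positivity
    have h1 : 1 + (k : ℝ) / ((p : ℝ) + 1) = ((k : ℝ) + p + 1) / ((p : ℝ) + 1) := by
      field_simp; ring
    rw [hM, h1, div_pow, hfact]
    have hkp : (0:ℝ) < (k : ℝ) + p + 1 := by positivity
    have hfp : (0:ℝ) < (p.factorial : ℝ) := by positivity
    field_simp
    ring
  rw [← heq]
  exact hconv
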